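/- Let X₁, X₂ be complete separable metric spaces, γₙ ∈ 𝓜(X₁×X₂) a sequence converging weakly to γ, and d̂ₙ : X₁×X₂ → [0,∞) a sequence of functions, each 1-Lipschitz with respect to the metric d₁ + d₂ on X₁×X₂, converging pointwise to d̂ and uniformly on compact sets, with {γₙ} equally tight and uniformly bounded in mass. Let ℓ : [0,∞) → [0,∞] be lower semicontinuous and increasing. Then liminf_n ∫_{X₁×X₂} ℓ(d̂ₙ(x,y)) dγₙ ≥ ∫_{X₁×X₂} ℓ(d̂(x,y)) dγ. -/

import Mathlib

open MeasureTheory ENNReal Filter Topology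

/-- Portmanteau-type inequality for a bounded lower semicontinuous `ℝ≥0∞`-valued function,
assuming the liminf condition on open sets. -/
lemma aux_lsc_lintegral_le_liminf {Ω : Type*} [MeasurableSpace Ω] [TopologicalSpace Ω]
    [OpensMeasurableSpace Ω] {μ : Measure Ω} {μs : ℕ → Measure Ω} {g : Ω → ℝ≥0∞}
    (g_lsc : LowerSemicontinuous g) {C : ℝ≥0∞} (hC : C ≠ ⊤) (g_bdd : ∀ x, g x ≤ C)
    (h_opens : ∀ G, IsOpen G → μ G ≤ atTop.liminf (fun i => μs i G)) :
    ∫⁻ x, g x ∂μ ≤ atTop.liminf (fun i => ∫⁻ x, g x ∂(μs i)) := by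
  have g_ne_top : ∀ x, g x ≠ ⊤ := fun x => ((g_bdd x).trans_lt hC.lt_top).ne
  have g_mble : Measurable g := g_lsc.measurable
  set f : Ω → ℝ := fun x => (g x).toReal with hf
  have f_nn : ∀ x, 0 ≤ f x := fun x => ENNReal.toReal_nonneg
  have f_mble : Measurable f := g_mble.ennreal_toReal
  have key : ∀ ν : Measure Ω, ∫⁻ x, g x ∂ν = ∫⁻ t in Set.Ioi (0:ℝ), ν {a | t < f a} := by
    intro ν
    rw [← lintegral_eq_lintegral_meas_lt ν (Eventually.of_forall f_nn) f_mble.aemeasurable]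
    exact lintegral_congr fun x => (ENNReal.ofReal_toReal (g_ne_top x)).symm
  have anti : ∀ ν : Measure Ω, Antitone (fun t : ℝ => ν {a | t < f a}) := fun ν s t hst =>
    measure_mono fun a ha => lt_of_le_of_lt hst ha
  calc ∫⁻ x, g x ∂μ = ∫⁻ t in Set.Ioi (0:ℝ), μ {a | t < f a} := key μ
    _ ≤ ∫⁻ t in Set.Ioi (0:ℝ), atTop.liminf (fun i => μs i {a | t < f a}) := by
        refine setLIntegral_mono' measurableSet_Ioi fun t ht => ?_
        have hset : {a | t < f a} = g ⁻¹' Set.Ioi (ENNReal.ofReal t) := by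
          ext a
          simp only [Set.mem_setOf_eq, Set.mem_preimage, Set.mem_Ioi]
          exact (ENNReal.ofReal_lt_iff_lt_toReal (le_of_lt ht) (g_ne_top a)).symm
        rw [hset]
        exact h_opens _ (g_lsc.isOpen_preimage _)
    _ ≤ atTop.liminf (fun i => ∫⁻ t in Set.Ioi (0:ℝ), μs i {a | t < f a}) :=
        lintegral_liminf_le fun i => (anti (μs i)).measurable
    _ = atTop.liminf (fun i => ∫⁻ x, g x ∂(μs i)) := by
        congr 1
        exact funext fun i => (key (μs i)).symm

/-- Lower semicontinuity of the transport part of the Entropy-Transport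
functional along a weakly converging, equally tight, mass-bounded sequence of plans `γₙ ⇀ γ`
and a sequence of `1`-Lipschitz (w.r.t. `d₁+d₂`) pseudo-distances `d̂ₙ → d̂` converging
pointwise and uniformly on compact sets, for `ℓ` lower semicontinuous and increasing:
`liminf ∫ ℓ(d̂ₙ) dγₙ ≥ ∫ ℓ(d̂) dγ`. -/
theorem liminf_transport_lsc
    {X₁ X₂ : Type*} [MetricSpace X₁] [MetricSpace X₂]
    [CompleteSpace X₁] [CompleteSpace X₂]
    [TopologicalSpace.SeparableSpace X₁] [TopologicalSpace.SeparableSpace X₂]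
    [MeasurableSpace X₁] [BorelSpace X₁] [MeasurableSpace X₂] [BorelSpace X₂]
    (γ : ℕ → Measure (X₁ × X₂)) (γlim : Measure (X₁ × X₂))
    [∀ n, IsFiniteMeasure (γ n)] [IsFiniteMeasure γlim]
    (hweak : ∀ f : BoundedContinuousFunction (X₁ × X₂) ℝ,
      Tendsto (fun n => ∫ q, f q ∂(γ n)) atTop (nhds (∫ q, f q ∂γlim)))
    (dhn : ℕ → X₁ × X₂ → ℝ) (dh : X₁ × X₂ → ℝ)
    (hnonneg : ∀ n q, 0 ≤ dhn n q)
    (hlip : ∀ n (q q' : X₁ × X₂), |dhn n q - dhn n q'| ≤ dist q.1 q'.1 + dist q.2 q'.2)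
    (hptwise : ∀ q, Tendsto (fun n => dhn n q) atTop (nhds (dh q)))
    (hunif : ∀ K : Set (X₁ × X₂), IsCompact K → TendstoUniformlyOn dhn dh atTop K)
    (htight : ∀ ε : ℝ, 0 < ε → ∃ K : Set (X₁ × X₂), IsCompact K ∧
      ∀ n, γ n Kᶜ ≤ ENNReal.ofReal ε)
    (hbound : ∃ Mb : ℝ≥0∞, Mb ≠ ⊤ ∧ ∀ n, γ n Set.univ ≤ Mb)
    (ℓ : ℝ → ℝ≥0∞) (hℓlsc : LowerSemicontinuous ℓ) (hℓmono : Monotone ℓ) :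
    ∫⁻ q, ℓ (dh q) ∂γlim ≤
      Filter.liminf (fun n => ∫⁻ q, ℓ (dhn n q) ∂(γ n)) atTop := by
  -- `dh` is Lipschitz, hence continuous
  have hdh_lip : ∀ q q' : X₁ × X₂, |dh q - dh q'| ≤ dist q.1 q'.1 + dist q.2 q'.2 := by
    intro q q'
    exact le_of_tendsto (((hptwise q).sub (hptwise q')).abs)
      (Eventually.of_forall fun n => hlip n q q')
  have dh_cont : Continuous dh := by
    refine (LipschitzWith.of_dist_le_mul (K := 2) fun q q' => ?_).continuous
    rw [Real.dist_eq]
    refine (hdh_lip q q').trans ?_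
    have h1 : dist q.1 q'.1 ≤ dist q q' := le_max_left _ _
    have h2 : dist q.2 q'.2 ≤ dist q q' := le_max_right _ _
    push_cast
    linarith
  have dhn_cont : ∀ n, Continuous (dhn n) := by
    intro n
    refine (LipschitzWith.of_dist_le_mul (K := 2) fun q q' => ?_).continuous
    rw [Real.dist_eq]
    refine (hlip n q q').trans ?_
    have h1 : dist q.1 q'.1 ≤ dist q q' := le_max_left _ _
    have h2 : dist q.2 q'.2 ≤ dist q q' := le_max_right _ _
    push_cast
    linarith
  have ℓ_mble : Measurable ℓ := hℓlsc.measurable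
  -- FiniteMeasure weak convergence
  set ν : ℕ → FiniteMeasure (X₁ × X₂) := fun n => ⟨γ n, inferInstance⟩ with hν_def
  set νlim : FiniteMeasure (X₁ × X₂) := ⟨γlim, inferInstance⟩ with hνlim_def
  have hν : Tendsto ν atTop (𝓝 νlim) :=
    FiniteMeasure.tendsto_iff_forall_integral_tendsto.mpr hweak
  have hclosed : ∀ F : Set (X₁ × X₂), IsClosed F →
      atTop.limsup (fun n => γ n F) ≤ γlim F := fun F hF =>
    FiniteMeasure.limsup_measure_closed_le_of_tendsto hν hF
  -- Convergence of the total masses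
  have hmass : Tendsto (fun n => γ n Set.univ) atTop (𝓝 (γlim Set.univ)) := by
    have h1 := hweak (BoundedContinuousFunction.const _ (1:ℝ))
    have h1' : Tendsto (fun n => (γ n Set.univ).toReal) atTop (𝓝 (γlim Set.univ).toReal) := by
      simpa [integral_const, Measure.real_def] using h1
    have h2 := ENNReal.tendsto_ofReal h1'
    simpa only [ENNReal.ofReal_toReal (measure_ne_top _ _)] using h2
  -- Portmanteau: liminf condition on open sets
  have h_opens : ∀ G : Set (X₁ × X₂), IsOpen G →
      γlim G ≤ atTop.liminf (fun n => γ n G) := by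
    intro G G_open
    refine ENNReal.le_of_forall_pos_le_add fun ε εpos _ => ?_
    have half_ne : ((ε : ℝ≥0∞) / 2) ≠ 0 :=
      (ENNReal.half_pos (ENNReal.coe_ne_zero.mpr εpos.ne')).ne'
    have ev1 : ∀ᶠ n in atTop, γ n Gᶜ < γlim Gᶜ + (ε : ℝ≥0∞) / 2 := by
      refine eventually_lt_of_limsup_lt ?_
      exact lt_of_le_of_lt (hclosed Gᶜ G_open.isClosed_compl)
        (ENNReal.lt_add_right (measure_ne_top _ _) half_ne)
    have ev2 : ∀ᶠ n in atTop, γlim Set.univ ≤ γ n Set.univ + (ε : ℝ≥0∞) / 2 := by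
      refine hmass.eventually (p := fun x => γlim Set.univ ≤ x + (ε : ℝ≥0∞) / 2) ?_
      rcases eq_or_ne (γlim Set.univ) 0 with h0 | h0
      · filter_upwards [univ_mem] with x _
        simp [h0]
      · have hlt : γlim Set.univ - (ε : ℝ≥0∞) / 2 < γlim Set.univ :=
          ENNReal.sub_lt_self (measure_ne_top _ _) h0 half_ne
        filter_upwards [Ioi_mem_nhds hlt] with x hx
        exact tsub_le_iff_right.mp hx.le
    have ev : ∀ᶠ n in atTop, γlim G ≤ γ n G + (ε : ℝ≥0∞) := by
      filter_upwards [ev1, ev2] with n h1 h2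
      have e1 : γlim G + γlim Gᶜ = γlim Set.univ :=
        measure_add_measure_compl G_open.measurableSet
      have e2 : γ n G + γ n Gᶜ = γ n Set.univ :=
        measure_add_measure_compl G_open.measurableSet
      have chain : γlim G + γlim Gᶜ ≤ (γ n G + (ε : ℝ≥0∞)) + γlim Gᶜ := by
        calc γlim G + γlim Gᶜ = γlim Set.univ := e1
          _ ≤ γ n Set.univ + (ε : ℝ≥0∞) / 2 := h2
          _ = γ n G + γ n Gᶜ + (ε : ℝ≥0∞) / 2 := by rw [e2]
          _ ≤ γ n G + (γlim Gᶜ + (ε : ℝ≥0∞) / 2) + (ε : ℝ≥0∞) / 2 :=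
              add_le_add_left (add_le_add_right h1.le _) _
          _ = (γ n G + ((ε : ℝ≥0∞) / 2 + (ε : ℝ≥0∞) / 2)) + γlim Gᶜ := by ring
          _ = (γ n G + (ε : ℝ≥0∞)) + γlim Gᶜ := by rw [ENNReal.add_halves]
      exact (ENNReal.add_le_add_iff_right (measure_ne_top γlim Gᶜ)).mp chain
    have step : γlim G ≤ atTop.liminf (fun n => γ n G + (ε : ℝ≥0∞)) :=
      le_liminf_of_le (by isBoundedDefault) ev
    rwa [liminf_add_const atTop (fun n => γ n G) (ε : ℝ≥0∞)
      (isCoboundedUnder_ge_of_le atTop fun _ => le_top) isBounded_ge_of_bot] at step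
  set I : ℕ → ℝ≥0∞ := fun n => ∫⁻ q, ℓ (dhn n q) ∂(γ n) with hI
  set L : ℝ≥0∞ := atTop.liminf I with hL
  -- Reduction to the truncated `ℓ`
  have meas_m : ∀ m : ℕ, Measurable fun q => min (ℓ (dh q)) (m : ℝ≥0∞) := fun m =>
    (ℓ_mble.comp dh_cont.measurable).min measurable_const
  have sup_eq : ∀ q, ℓ (dh q) = ⨆ m : ℕ, min (ℓ (dh q)) (m : ℝ≥0∞) := by
    intro q
    refine le_antisymm ?_ (iSup_le fun m => min_le_left _ _)
    by_cases h : ℓ (dh q) = ⊤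
    · rw [h]
      have : ∀ m : ℕ, min (⊤ : ℝ≥0∞) (m : ℝ≥0∞) = (m : ℝ≥0∞) := fun m => min_eq_right le_top
      simp only [this]
      rw [ENNReal.iSup_natCast]
    · obtain ⟨m, hm⟩ := ENNReal.exists_nat_gt h
      calc ℓ (dh q) = min (ℓ (dh q)) (m : ℝ≥0∞) := (min_eq_left hm.le).symm
        _ ≤ ⨆ m : ℕ, min (ℓ (dh q)) (m : ℝ≥0∞) := le_iSup (f := fun m : ℕ => min (ℓ (dh q)) (m : ℝ≥0∞)) m
  -- Main step: truncated version
  have step1 : ∀ m : ℕ, ∫⁻ q, min (ℓ (dh q)) (m : ℝ≥0∞) ∂γlim ≤ L := by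
    intro m
    refine ENNReal.le_of_forall_pos_le_add fun ε εpos _ => ?_
    set εr : ℝ := (ε : ℝ) / (m + 1) with hεr
    have εr_pos : 0 < εr := by
      have : (0:ℝ) < (ε : ℝ) := εpos
      positivity
    obtain ⟨K, K_cpt, K_tight⟩ := htight εr εr_pos
    -- the approximating sequence
    set g : ℕ → X₁ × X₂ → ℝ≥0∞ :=
      fun k q => min (ℓ (dh q - 1 / ((k : ℝ) + 1))) (m : ℝ≥0∞) with hg
    have g_lsc : ∀ k, LowerSemicontinuous (g k) := by
      intro k
      have h1 : LowerSemicontinuous fun q : X₁ × X₂ => ℓ (dh q - 1 / ((k : ℝ) + 1)) :=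
        LowerSemicontinuous.comp hℓlsc (dh_cont.sub continuous_const)
      have hcont : Continuous fun y : ℝ≥0∞ => min y (m : ℝ≥0∞) :=
        continuous_id.min continuous_const
      exact hcont.comp_lowerSemicontinuous h1 fun a b hab => min_le_min hab le_rfl
    have g_mble : ∀ k, Measurable (g k) := fun k => (g_lsc k).measurable
    have g_mono : Monotone g := by
      intro k k' hkk' q
      refine min_le_min (hℓmono ?_) le_rfl
      have : 1 / ((k' : ℝ) + 1) ≤ 1 / ((k : ℝ) + 1) := by
        apply one_div_le_one_div_of_le
        · positivity
        · exact_mod_cast Nat.succ_le_succ hkk'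
      linarith
    -- Claim 1: each approximation integral bounded by `L + m * εr`
    have claim1 : ∀ k, ∫⁻ q, g k q ∂γlim ≤ L + (m : ℝ≥0∞) * ENNReal.ofReal εr := by
      intro k
      set δ : ℝ := 1 / ((k : ℝ) + 1) with hδ
      have δpos : 0 < δ := by positivity
      have hev : ∀ᶠ n in atTop, ∀ q ∈ K, dist (dh q) (dhn n q) < δ :=
        (Metric.tendstoUniformlyOn_iff.mp (hunif K K_cpt)) δ δpos
      have hev2 : ∀ᶠ n in atTop,
          ∫⁻ q, g k q ∂(γ n) ≤ I n + (m : ℝ≥0∞) * ENNReal.ofReal εr := by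
        filter_upwards [hev] with n hn
        have pt : ∀ q, g k q ≤ K.indicator (fun q => ℓ (dhn n q)) q
            + Kᶜ.indicator (fun _ => (m : ℝ≥0∞)) q := by
          intro q
          by_cases hq : q ∈ K
          · have hd : dh q - δ ≤ dhn n q := by
              have h1 := hn q hq
              rw [Real.dist_eq] at h1
              have := (abs_lt.mp h1).2
              linarith
            rw [Set.indicator_of_mem hq, Set.indicator_of_notMem (by simpa using hq)]
            calc g k q ≤ ℓ (dh q - δ) := min_le_left _ _
              _ ≤ ℓ (dhn n q) := hℓmono hd
              _ ≤ ℓ (dhn n q) + 0 := by rw [add_zero]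
          · rw [Set.indicator_of_notMem hq, Set.indicator_of_mem (Set.mem_compl hq)]
            calc g k q ≤ (m : ℝ≥0∞) := min_le_right _ _
              _ ≤ 0 + (m : ℝ≥0∞) := by rw [zero_add]
        calc ∫⁻ q, g k q ∂(γ n)
            ≤ ∫⁻ q, (K.indicator (fun q => ℓ (dhn n q)) q
              + Kᶜ.indicator (fun _ => (m : ℝ≥0∞)) q) ∂(γ n) := lintegral_mono pt
          _ = ∫⁻ q, K.indicator (fun q => ℓ (dhn n q)) q ∂(γ n)
              + ∫⁻ q, Kᶜ.indicator (fun _ => (m : ℝ≥0∞)) q ∂(γ n) :=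
              lintegral_add_left
                ((ℓ_mble.comp (dhn_cont n).measurable).indicator
                  K_cpt.isClosed.measurableSet) _
          _ ≤ I n + (m : ℝ≥0∞) * ENNReal.ofReal εr := by
              refine add_le_add ?_ ?_
              · exact lintegral_mono fun q => Set.indicator_le_self _ _ q
              · rw [lintegral_indicator_const K_cpt.isClosed.measurableSet.compl]
                exact mul_le_mul' le_rfl (K_tight n)
      calc ∫⁻ q, g k q ∂γlim
          ≤ atTop.liminf (fun n => ∫⁻ q, g k q ∂(γ n)) :=
            aux_lsc_lintegral_le_liminf (g_lsc k) (ENNReal.natCast_ne_top m)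
              (fun x => min_le_right _ _) h_opens
        _ ≤ atTop.liminf (fun n => I n + (m : ℝ≥0∞) * ENNReal.ofReal εr) :=
            liminf_le_liminf hev2
        _ = L + (m : ℝ≥0∞) * ENNReal.ofReal εr :=
            liminf_add_const atTop I _ (isCoboundedUnder_ge_of_le atTop fun _ => le_top) isBounded_ge_of_bot
    -- Claim 2: pointwise approximation from below
    have pt2 : ∀ q, min (ℓ (dh q)) (m : ℝ≥0∞) ≤ ⨆ k, g k q := by
      intro q
      refine le_of_forall_lt fun c hc => ?_
      have hc1 : c < ℓ (dh q) := hc.trans_le (min_le_left _ _)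
      have hc2 : c < (m : ℝ≥0∞) := hc.trans_le (min_le_right _ _)
      have hnb : ∀ᶠ x in 𝓝 (dh q), c < ℓ x := hℓlsc (dh q) c hc1
      have hseq : Tendsto (fun k : ℕ => dh q - 1 / ((k : ℝ) + 1)) atTop (𝓝 (dh q)) := by
        have h0 := tendsto_one_div_add_atTop_nhds_zero_nat (𝕜 := ℝ)
        simpa using h0.const_sub (dh q)
      obtain ⟨k, hk⟩ := (hseq.eventually hnb).exists
      exact lt_of_lt_of_le (lt_min hk hc2) (le_iSup (fun k => g k q) k)
    have claim2 : ∫⁻ q, min (ℓ (dh q)) (m : ℝ≥0∞) ∂γlim ≤ ⨆ k, ∫⁻ q, g k q ∂γlim := by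
      calc ∫⁻ q, min (ℓ (dh q)) (m : ℝ≥0∞) ∂γlim
          ≤ ∫⁻ q, ⨆ k, g k q ∂γlim := lintegral_mono pt2
        _ = ⨆ k, ∫⁻ q, g k q ∂γlim := lintegral_iSup g_mble g_mono
    -- the error term is at most `ε`
    have herr : (m : ℝ≥0∞) * ENNReal.ofReal εr ≤ (ε : ℝ≥0∞) := by
      have h1 : (m : ℝ≥0∞) * ENNReal.ofReal εr = ENNReal.ofReal ((m : ℝ) * εr) := by
        rw [ENNReal.ofReal_mul (by positivity : (0:ℝ) ≤ (m:ℝ))]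
        rw [ENNReal.ofReal_natCast]
      have h2 : (m : ℝ) * εr ≤ (ε : ℝ) := by
        rw [hεr, mul_div_assoc']
        rw [div_le_iff₀ (by positivity : (0:ℝ) < (m:ℝ) + 1)]
        have hε0 : (0:ℝ) ≤ (ε : ℝ) := ε.coe_nonneg
        nlinarith
      calc (m : ℝ≥0∞) * ENNReal.ofReal εr = ENNReal.ofReal ((m : ℝ) * εr) := h1
        _ ≤ ENNReal.ofReal (ε : ℝ) := ENNReal.ofReal_le_ofReal h2
        _ = (ε : ℝ≥0∞) := ENNReal.ofReal_coe_nnreal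
    calc ∫⁻ q, min (ℓ (dh q)) (m : ℝ≥0∞) ∂γlim
        ≤ ⨆ k, ∫⁻ q, g k q ∂γlim := claim2
      _ ≤ L + (m : ℝ≥0∞) * ENNReal.ofReal εr := iSup_le claim1
      _ ≤ L + (ε : ℝ≥0∞) := add_le_add_right herr _
  calc ∫⁻ q, ℓ (dh q) ∂γlim
      = ∫⁻ q, ⨆ m : ℕ, min (ℓ (dh q)) (m : ℝ≥0∞) ∂γlim := lintegral_congr sup_eq
    _ = ⨆ m : ℕ, ∫⁻ q, min (ℓ (dh q)) (m : ℝ≥0∞) ∂γlim :=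
        lintegral_iSup meas_m fun m m' h q => min_le_min le_rfl (Nat.cast_le.mpr h)
    _ ≤ L := iSup_le step1
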